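/- Consider the two-layer minimalist model trained on a dataset (X, y) with dataset difficulty Q > 0. Let θ* = (u*, v₁*) be any global minimizer of L with L(θ*) = 0. Then v₁* ≠ 0, (v₁*)² = (√(C(θ*)² + 4Q) − C(θ*))/2, and the sharpness satisfies (1/N)·[σ₁²(v₁*)² + d₁²/(v₁*)²] ≤ S(θ*) ≤ (1/N)·[σ₁²(v₁*)² + (Σ_{i=1}^r d_i²)/(v₁*)²]. -/

import Mathlib

open scoped BigOperators

/-- Sharpness `S(θ) = λ_max(∇²L(θ))`: the largest eigenvalue of the Hessian of `L` at `θ`,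
expressed as the supremum of the Hessian quadratic form over the unit sphere. -/
noncomputable def sharpness {E : Type*} [NormedAddCommGroup E] [NormedSpace ℝ E]
    (L : E → ℝ) (θ : E) : ℝ :=
  sSup {c : ℝ | ∃ ξ : E, ‖ξ‖ = 1 ∧ fderiv ℝ (fderiv ℝ L) θ ξ ξ = c}

lemma ortho_lin {N r : ℕ} (e : Fin r → Fin N → ℝ)
    (he : ∀ i j : Fin r, ∑ n, e i n * e j n = if i = j then (1:ℝ) else 0)
    (c : Fin r → ℝ) (j : Fin r) :
    ∑ n, (∑ i, c i * e i n) * e j n = c j := by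
  have h : ∀ n : Fin N, (∑ i, c i * e i n) * e j n = ∑ i, c i * (e i n * e j n) := by
    intro n; rw [Finset.sum_mul]; exact Finset.sum_congr rfl fun i _ => by ring
  simp_rw [h]
  rw [Finset.sum_comm]
  have h2 : ∀ i : Fin r, ∑ n, c i * (e i n * e j n) = c i * (if i = j then (1:ℝ) else 0) := by
    intro i; rw [← Finset.mul_sum, he]
  simp_rw [h2]
  simp

lemma ortho_sq {N r : ℕ} (e : Fin r → Fin N → ℝ)
    (he : ∀ i j : Fin r, ∑ n, e i n * e j n = if i = j then (1:ℝ) else 0)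
    (c : Fin r → ℝ) :
    ∑ n, (∑ i, c i * e i n) ^ 2 = ∑ i, c i ^ 2 := by
  have h : ∀ n : Fin N, (∑ i, c i * e i n) ^ 2 = ∑ j, c j * ((∑ i, c i * e i n) * e j n) := by
    intro n
    rw [sq, Finset.mul_sum]
    exact Finset.sum_congr rfl fun jj _ => by ring
  simp_rw [h]
  rw [Finset.sum_comm]
  refine Finset.sum_congr rfl fun j _ => ?_
  rw [← Finset.mul_sum, ortho_lin e he c j, sq]

lemma bessel {r dd : ℕ} (w : Fin r → Fin dd → ℝ)
    (hw : ∀ i j : Fin r, ∑ m, w i m * w j m = if i = j then (1:ℝ) else 0)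
    (a : Fin dd → ℝ) :
    ∑ i, (∑ m, w i m * a m) ^ 2 ≤ ∑ m, a m ^ 2 := by
  set α : Fin r → ℝ := fun i => ∑ m, w i m * a m with hα
  have hcross : ∑ m, (∑ i, α i * w i m) * a m = ∑ i, α i ^ 2 := by
    have h : ∀ m : Fin dd, (∑ i, α i * w i m) * a m = ∑ i, α i * (w i m * a m) := by
      intro m; rw [Finset.sum_mul]; exact Finset.sum_congr rfl fun i _ => by ring
    simp_rw [h]
    rw [Finset.sum_comm]
    refine Finset.sum_congr rfl fun i _ => ?_
    rw [← Finset.mul_sum, show (∑ m, w i m * a m) = α i from rfl, sq]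
  have hSq : ∑ m, (∑ i, α i * w i m) ^ 2 = ∑ i, α i ^ 2 := ortho_sq w hw α
  have h0 : 0 ≤ ∑ m, (a m - ∑ i, α i * w i m) ^ 2 :=
    Finset.sum_nonneg fun m _ => sq_nonneg _
  have hexp : ∑ m, (a m - ∑ i, α i * w i m) ^ 2
      = ∑ m, a m ^ 2 - 2 * (∑ m, (∑ i, α i * w i m) * a m)
        + ∑ m, (∑ i, α i * w i m) ^ 2 := by
    have h2 : ∀ m : Fin dd, (a m - ∑ i, α i * w i m) ^ 2
        = a m ^ 2 - 2 * ((∑ i, α i * w i m) * a m) + (∑ i, α i * w i m) ^ 2 := by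
      intro m; ring
    simp_rw [h2]
    rw [Finset.sum_add_distrib, Finset.sum_sub_distrib, Finset.mul_sum]
  rw [hexp, hcross, hSq] at h0
  linarith

lemma key_upper {r : ℕ} (hr : 0 < r) (σ dc α : Fin r → ℝ) (v b s : ℝ)
    (hσpos : ∀ i, 0 < σ i)
    (hσdec : ∀ i j : Fin r, i ≤ j → σ j ≤ σ i)
    (hv : v ≠ 0) (hα : ∑ i, α i ^ 2 ≤ s) (hsb : s + b ^ 2 ≤ 1) (hs : 0 ≤ s) :
    ∑ i, (σ i * α i * v + dc i / v * b) ^ 2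
      ≤ σ ⟨0, hr⟩ ^ 2 * v ^ 2 + (∑ i, dc i ^ 2) / v ^ 2 := by
  obtain ⟨σ1, hσ1⟩ : ∃ x, σ ⟨0, hr⟩ = x := ⟨_, rfl⟩
  obtain ⟨T1, hT1def⟩ : ∃ x, ∑ i, (σ i * α i) ^ 2 = x := ⟨_, rfl⟩
  obtain ⟨T2, hT2def⟩ : ∃ x, ∑ i, (σ i * α i) * dc i = x := ⟨_, rfl⟩
  obtain ⟨D, hDdef⟩ : ∃ x, ∑ i, dc i ^ 2 = x := ⟨_, rfl⟩
  rw [hσ1, hDdef]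
  have hv2 : (0:ℝ) < v ^ 2 := by positivity
  have hexp : ∑ i, (σ i * α i * v + dc i / v * b) ^ 2
      = v ^ 2 * T1 + 2 * b * T2 + b ^ 2 * D / v ^ 2 := by
    have h : ∀ i : Fin r, (σ i * α i * v + dc i / v * b) ^ 2
        = v ^ 2 * (σ i * α i) ^ 2 + 2 * b * ((σ i * α i) * dc i) + b ^ 2 * dc i ^ 2 / v ^ 2 := by
      intro i
      field_simp
      ring
    simp_rw [h]
    rw [Finset.sum_add_distrib, Finset.sum_add_distrib, ← Finset.mul_sum, ← Finset.mul_sum,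
      ← Finset.sum_div, ← Finset.mul_sum, hT1def, hT2def, hDdef]
  have hT1 : T1 ≤ σ1 ^ 2 * s := by
    have h1 : T1 ≤ σ1 ^ 2 * ∑ i, α i ^ 2 := by
      rw [← hT1def, Finset.mul_sum]
      refine Finset.sum_le_sum fun i _ => ?_
      have hle : σ i ≤ σ1 := hσ1 ▸ hσdec ⟨0, hr⟩ i (by simp [Fin.le_def])
      have hsq : σ i ^ 2 ≤ σ1 ^ 2 := pow_le_pow_left₀ (hσpos i).le hle 2
      rw [mul_pow]
      exact mul_le_mul_of_nonneg_right hsq (sq_nonneg _)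
    have h2 : σ1 ^ 2 * ∑ i, α i ^ 2 ≤ σ1 ^ 2 * s :=
      mul_le_mul_of_nonneg_left hα (by positivity)
    linarith
  have hT1nn : 0 ≤ T1 := hT1def ▸ Finset.sum_nonneg fun i _ => sq_nonneg _
  have hDnn : 0 ≤ D := hDdef ▸ Finset.sum_nonneg fun i _ => sq_nonneg _
  have hT2sq : T2 ^ 2 ≤ T1 * D := by
    rw [← hT1def, ← hT2def, ← hDdef]
    exact Finset.sum_mul_sq_le_sq_mul_sq Finset.univ (fun i => σ i * α i) dc
  have hσ1pos : 0 < σ1 := hσ1 ▸ hσpos _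
  have hkey : 2 * b * T2 ≤ σ1 ^ 2 * v ^ 2 * b ^ 2 + s * D / v ^ 2 := by
    have h1 : (b * T2) ^ 2 ≤ (σ1 ^ 2 * v ^ 2 * b ^ 2) * (s * D / v ^ 2) := by
      have heq : (σ1 ^ 2 * v ^ 2 * b ^ 2) * (s * D / v ^ 2) = σ1 ^ 2 * s * D * b ^ 2 := by
        field_simp
      rw [heq]
      have h2 : T2 ^ 2 ≤ σ1 ^ 2 * s * D := by
        nlinarith [hT2sq, hT1, hDnn]
      nlinarith [sq_nonneg b, h2]
    nlinarith [h1, sq_nonneg (σ1 ^ 2 * v ^ 2 * b ^ 2 - s * D / v ^ 2),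
      mul_nonneg (mul_nonneg (sq_nonneg σ1) (sq_nonneg v)) (sq_nonneg b),
      div_nonneg (mul_nonneg hs hDnn) hv2.le]
  rw [hexp]
  have hfin1 : v ^ 2 * T1 ≤ σ1 ^ 2 * v ^ 2 * s := by nlinarith [hv2, hT1]
  have hDv : 0 ≤ D / v ^ 2 := div_nonneg hDnn hv2.le
  have hbb : 0 ≤ b ^ 2 := sq_nonneg b
  have hσv : 0 ≤ σ1 ^ 2 * v ^ 2 := by positivity
  have h3 : b ^ 2 * D / v ^ 2 + s * D / v ^ 2 ≤ D / v ^ 2 := by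
    rw [← add_div]
    have hnum : b ^ 2 * D + s * D ≤ D := by nlinarith [hDnn, hsb, hs, hbb]
    exact div_le_div_of_nonneg_right hnum hv2.le
  have h4 : σ1 ^ 2 * v ^ 2 * s + σ1 ^ 2 * v ^ 2 * b ^ 2 ≤ σ1 ^ 2 * v ^ 2 :=
    calc σ1 ^ 2 * v ^ 2 * s + σ1 ^ 2 * v ^ 2 * b ^ 2 = σ1 ^ 2 * v ^ 2 * (s + b ^ 2) := by ring
    _ ≤ σ1 ^ 2 * v ^ 2 * 1 := mul_le_mul_of_nonneg_left hsb hσv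
    _ = σ1 ^ 2 * v ^ 2 := mul_one _
  linarith [hkey, hfin1, h3, h4]

lemma hessian_apply {N dd : ℕ} (hN : 0 < N)
    (X : Matrix (Fin N) (Fin dd) ℝ) (y : Fin N → ℝ)
    (L : EuclideanSpace ℝ (Fin dd ⊕ Unit) → ℝ)
    (hL : ∀ θ, L θ = (1 / (2 * (N : ℝ))) *
      ∑ n, ((∑ m, X n m * θ (Sum.inl m)) * θ (Sum.inr ()) - y n) ^ 2)
    (θs ξ : EuclideanSpace ℝ (Fin dd ⊕ Unit))
    (hres : ∀ n, (∑ m, X n m * θs (Sum.inl m)) * θs (Sum.inr ()) - y n = 0) :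
    fderiv ℝ (fderiv ℝ L) θs ξ ξ =
      (1 / (N : ℝ)) * ∑ n, ((∑ m, X n m * ξ (Sum.inl m)) * θs (Sum.inr ())
        + (∑ m, X n m * θs (Sum.inl m)) * ξ (Sum.inr ())) ^ 2 := by
  classical
  let E := EuclideanSpace ℝ (Fin dd ⊕ Unit)
  let A : Fin N → (E →L[ℝ] ℝ) := fun n => ∑ m, X n m • EuclideanSpace.proj (Sum.inl m)
  let B : E →L[ℝ] ℝ := EuclideanSpace.proj (Sum.inr ())
  have hA : ∀ (n) (θ : E), A n θ = ∑ m, X n m * θ (Sum.inl m) := by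
    intro n θ
    simp only [A, ContinuousLinearMap.sum_apply, ContinuousLinearMap.smul_apply, smul_eq_mul]
    rfl
  have hB : ∀ θ : E, B θ = θ (Sum.inr ()) := fun θ => rfl
  let K : Fin N → (E →L[ℝ] (E →L[ℝ] ℝ)) := fun n =>
    (A n).smulRight B + B.smulRight (A n)
  have hK : ∀ (n) (θ : E), K n θ = A n θ • B + B θ • A n := by
    intro n θ
    ext ζ
    simp [K, ContinuousLinearMap.smulRight_apply, ContinuousLinearMap.add_apply,
      ContinuousLinearMap.smul_apply]
  let P : Fin N → E → ℝ := fun n θ => A n θ * B θ - y n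
  have hP : ∀ (n) (θ : E), HasFDerivAt (P n) (K n θ) θ := by
    intro n θ
    have h1 : HasFDerivAt (fun θ : E => A n θ * B θ) (A n θ • B + B θ • A n) θ :=
      (A n).hasFDerivAt.mul B.hasFDerivAt
    rw [hK]
    exact h1.sub_const (y n)
  let G : E → (E →L[ℝ] ℝ) := fun θ =>
    (1 / (2 * (N : ℝ))) • ∑ n, (P n θ • K n θ + P n θ • K n θ)
  have hLG : ∀ θ : E, HasFDerivAt L (G θ) θ := by
    intro θ
    have hfun : L = fun θ : E => (1 / (2 * (N : ℝ))) * ∑ n, P n θ * P n θ := by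
      funext θ
      rw [hL]
      congr 1
      refine Finset.sum_congr rfl fun n _ => ?_
      rw [← hA, sq]
      rfl
    rw [hfun]
    have hsum : HasFDerivAt (fun θ : E => ∑ n, P n θ * P n θ)
        (∑ n, (P n θ • K n θ + P n θ • K n θ)) θ :=
      HasFDerivAt.fun_sum fun n _ => (hP n θ).mul (hP n θ)
    exact hsum.const_mul _
  have hfderiv : fderiv ℝ L = G := funext fun θ => (hLG θ).fderiv
  let H : E →L[ℝ] (E →L[ℝ] ℝ) :=
    (1 / (2 * (N : ℝ))) • ∑ n,
      ((P n θs • K n + (K n θs).smulRight (K n θs))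
        + (P n θs • K n + (K n θs).smulRight (K n θs)))
  have hGH : HasFDerivAt G H θs := by
    have hterm : ∀ n : Fin N, HasFDerivAt (fun θ : E => P n θ • K n θ + P n θ • K n θ)
        ((P n θs • K n + (K n θs).smulRight (K n θs))
          + (P n θs • K n + (K n θs).smulRight (K n θs))) θs := by
      intro n
      have hKd : HasFDerivAt (fun θ : E => K n θ) (K n) θs := (K n).hasFDerivAt
      have h1 : HasFDerivAt (fun θ : E => P n θ • K n θ)
          (P n θs • K n + (K n θs).smulRight (K n θs)) θs :=
        (hP n θs).smul hKd
      exact h1.add h1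
    exact (HasFDerivAt.fun_sum fun n _ => hterm n).fun_const_smul _
  have hsecond : fderiv ℝ (fderiv ℝ L) θs = H := by
    rw [hfderiv]
    exact hGH.fderiv
  rw [hsecond]
  have hPz : ∀ n, P n θs = 0 := by
    intro n
    have := hres n
    rw [← hA] at this
    exact this
  have happly : H ξ ξ = (1 / (2 * (N : ℝ))) * ∑ n, (2 * (K n θs ξ) * (K n θs ξ)) := by
    simp only [H, ContinuousLinearMap.smul_apply, ContinuousLinearMap.sum_apply,
      ContinuousLinearMap.add_apply, ContinuousLinearMap.smulRight_apply, smul_eq_mul]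
    simp only [hPz, zero_mul, zero_add]
    rw [Finset.mul_sum, Finset.mul_sum]
    exact Finset.sum_congr rfl fun n _ => by ring
  rw [happly]
  have hKval : ∀ n, K n θs ξ = (∑ m, X n m * ξ (Sum.inl m)) * θs (Sum.inr ())
      + (∑ m, X n m * θs (Sum.inl m)) * ξ (Sum.inr ()) := by
    intro n
    rw [hK]
    simp only [ContinuousLinearMap.add_apply, ContinuousLinearMap.smul_apply, smul_eq_mul,
      hA, hB]
    ring
  have hNne : (N : ℝ) ≠ 0 := Nat.cast_ne_zero.mpr hN.ne'
  rw [Finset.mul_sum, Finset.mul_sum]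
  refine Finset.sum_congr rfl fun n _ => ?_
  rw [hKval]
  field_simp

/-- **Sharpness at minimizer, two-layer case.** -/
theorem two_layer_sharpness_at_minimizer
    (N dd r : ℕ) (hN : 0 < N) (hr : 0 < r)
    (X : Matrix (Fin N) (Fin dd) ℝ)
    (σ : Fin r → ℝ) (e : Fin r → Fin N → ℝ) (w : Fin r → Fin dd → ℝ)
    (dc : Fin r → ℝ) (y : Fin N → ℝ)
    (hσpos : ∀ i, 0 < σ i)
    (hσdec : ∀ i j : Fin r, i ≤ j → σ j ≤ σ i)
    (he : ∀ i j : Fin r, ∑ n, e i n * e j n = if i = j then (1 : ℝ) else 0)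
    (hw : ∀ i j : Fin r, ∑ m, w i m * w j m = if i = j then (1 : ℝ) else 0)
    (hX : ∀ n m, X n m = ∑ i, σ i * e i n * w i m)
    (hrank : X.rank = r)
    (hy : ∀ n, y n = ∑ i, dc i * e i n)
    (L : EuclideanSpace ℝ (Fin dd ⊕ Unit) → ℝ)
    (hL : ∀ θ, L θ = (1 / (2 * (N : ℝ))) *
      ∑ n, ((∑ m, X n m * θ (Sum.inl m)) * θ (Sum.inr ()) - y n) ^ 2)
    (Q : ℝ) (hQ : Q = ∑ i, dc i ^ 2 / σ i ^ 2) (hQpos : 0 < Q)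
    (θs : EuclideanSpace ℝ (Fin dd ⊕ Unit))
    (hmin : ∀ θ, L θs ≤ L θ) (hzero : L θs = 0)
    (C : ℝ)
    (hC : C = (∑ i, (∑ m, w i m * θs (Sum.inl m)) ^ 2) - θs (Sum.inr ()) ^ 2) :
    θs (Sum.inr ()) ≠ 0 ∧
    θs (Sum.inr ()) ^ 2 = (Real.sqrt (C ^ 2 + 4 * Q) - C) / 2 ∧
    (1 / (N : ℝ)) * (σ ⟨0, hr⟩ ^ 2 * θs (Sum.inr ()) ^ 2
        + dc ⟨0, hr⟩ ^ 2 / θs (Sum.inr ()) ^ 2) ≤ sharpness L θs ∧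
    sharpness L θs ≤ (1 / (N : ℝ)) * (σ ⟨0, hr⟩ ^ 2 * θs (Sum.inr ()) ^ 2
        + (∑ i, dc i ^ 2) / θs (Sum.inr ()) ^ 2) := by
  classical
  have hNne : (N : ℝ) ≠ 0 := Nat.cast_ne_zero.mpr hN.ne'
  have hNpos : (0:ℝ) < N := Nat.cast_pos.mpr hN
  -- SVD expansion of X applied to a vector
  have hXz : ∀ (z : EuclideanSpace ℝ (Fin dd ⊕ Unit)) (n : Fin N),
      ∑ m, X n m * z (Sum.inl m)
      = ∑ i, σ i * (∑ m, w i m * z (Sum.inl m)) * e i n := by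
    intro z n
    simp_rw [hX, Finset.sum_mul]
    rw [Finset.sum_comm]
    refine Finset.sum_congr rfl fun i _ => ?_
    rw [Finset.mul_sum, Finset.sum_mul]
    refine Finset.sum_congr rfl fun m _ => ?_
    ring
  -- residuals vanish
  have hres : ∀ n, (∑ m, X n m * θs (Sum.inl m)) * θs (Sum.inr ()) - y n = 0 := by
    have h0 : ∑ n, ((∑ m, X n m * θs (Sum.inl m)) * θs (Sum.inr ()) - y n) ^ 2 = 0 := by
      have hz := hzero
      rw [hL] at hz
      have hc : (0:ℝ) < 1 / (2 * (N:ℝ)) := by positivity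
      rcases mul_eq_zero.mp hz with h | h
      · exact absurd h hc.ne'
      · exact h
    intro n
    have := (Finset.sum_eq_zero_iff_of_nonneg (fun n _ => sq_nonneg _)).mp h0 n
      (Finset.mem_univ n)
    exact sq_eq_zero_iff.mp this
  -- coefficient identities
  have hcoef : ∀ n, ∑ i, (σ i * (∑ m, w i m * θs (Sum.inl m)) * θs (Sum.inr ()) - dc i)
      * e i n = 0 := by
    intro n
    have hsplit : ∑ i, (σ i * (∑ m, w i m * θs (Sum.inl m)) * θs (Sum.inr ()) - dc i) * e i n
        = (∑ i, σ i * (∑ m, w i m * θs (Sum.inl m)) * e i n) * θs (Sum.inr ())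
          - ∑ i, dc i * e i n := by
      rw [Finset.sum_mul, ← Finset.sum_sub_distrib]
      exact Finset.sum_congr rfl fun i _ => by ring
    rw [hsplit, ← hXz θs n, ← hy]
    exact hres n
  have hd : ∀ i, σ i * (∑ m, w i m * θs (Sum.inl m)) * θs (Sum.inr ()) = dc i := by
    intro j
    have h := ortho_lin e he
      (fun i => σ i * (∑ m, w i m * θs (Sum.inl m)) * θs (Sum.inr ()) - dc i) j
    have h2 : ∑ n, (∑ i, (σ i * (∑ m, w i m * θs (Sum.inl m)) * θs (Sum.inr ()) - dc i)
        * e i n) * e j n = 0 :=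
      Finset.sum_eq_zero fun n _ => by rw [hcoef n, zero_mul]
    rw [h2] at h
    linarith [h.symm]
  -- Q in terms of v and o
  have hQo : Q = θs (Sum.inr ()) ^ 2 * ∑ i, (∑ m, w i m * θs (Sum.inl m)) ^ 2 := by
    rw [hQ, Finset.mul_sum]
    refine Finset.sum_congr rfl fun i _ => ?_
    rw [← hd i]
    have hσ : σ i ≠ 0 := (hσpos i).ne'
    field_simp
  have hv : θs (Sum.inr ()) ≠ 0 := by
    intro h
    have hdc : ∀ i, dc i = 0 := by
      intro i; rw [← hd i, h, mul_zero]
    rw [hQ] at hQpos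
    have hz0 : ∑ i, dc i ^ 2 / σ i ^ 2 = 0 :=
      Finset.sum_eq_zero fun i _ => by rw [hdc i]; simp
    linarith
  have hv2 : (0:ℝ) < θs (Sum.inr ()) ^ 2 :=
    lt_of_le_of_ne (sq_nonneg _) (Ne.symm (pow_ne_zero 2 hv))
  -- conjunct 2
  have hsumo : ∑ i, (∑ m, w i m * θs (Sum.inl m)) ^ 2 = Q / θs (Sum.inr ()) ^ 2 := by
    rw [hQo, mul_div_cancel_left₀ _ hv2.ne']
  have hCv : C = Q / θs (Sum.inr ()) ^ 2 - θs (Sum.inr ()) ^ 2 := by rw [hC, hsumo]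
  have hconj2 : θs (Sum.inr ()) ^ 2 = (Real.sqrt (C ^ 2 + 4 * Q) - C) / 2 := by
    have hQt : Q = θs (Sum.inr ()) ^ 2 * (θs (Sum.inr ()) ^ 2 + C) := by
      rw [hCv]
      field_simp
      ring
    have hkey : C ^ 2 + 4 * Q = (2 * θs (Sum.inr ()) ^ 2 + C) ^ 2 := by
      rw [hQt]; ring
    have hpos : 0 ≤ 2 * θs (Sum.inr ()) ^ 2 + C := by
      rw [hCv]
      have : 0 < Q / θs (Sum.inr ()) ^ 2 := div_pos hQpos hv2
      linarith [hv2]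
    rw [hkey, Real.sqrt_sq hpos]
    ring
  -- Hessian quadratic form
  have hHess : ∀ ξ : EuclideanSpace ℝ (Fin dd ⊕ Unit), fderiv ℝ (fderiv ℝ L) θs ξ ξ
      = (1/(N:ℝ)) * ∑ i, (σ i * (∑ m, w i m * ξ (Sum.inl m)) * θs (Sum.inr ())
          + dc i / θs (Sum.inr ()) * ξ (Sum.inr ())) ^ 2 := by
    intro ξ
    rw [hessian_apply hN X y L hL θs ξ hres]
    congr 1
    have hinner : ∀ n, (∑ m, X n m * ξ (Sum.inl m)) * θs (Sum.inr ())
        + (∑ m, X n m * θs (Sum.inl m)) * ξ (Sum.inr ())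
        = ∑ i, (σ i * (∑ m, w i m * ξ (Sum.inl m)) * θs (Sum.inr ())
            + dc i / θs (Sum.inr ()) * ξ (Sum.inr ())) * e i n := by
      intro n
      rw [hXz ξ n, hXz θs n,
        Finset.sum_mul, Finset.sum_mul, ← Finset.sum_add_distrib]
      refine Finset.sum_congr rfl fun i _ => ?_
      have hdi : σ i * (∑ m, w i m * θs (Sum.inl m)) = dc i / θs (Sum.inr ()) := by
        rw [← hd i]
        field_simp
      rw [hdi]
      ring
    calc ∑ n, ((∑ m, X n m * ξ (Sum.inl m)) * θs (Sum.inr ())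
          + (∑ m, X n m * θs (Sum.inl m)) * ξ (Sum.inr ())) ^ 2
        = ∑ n, (∑ i, (σ i * (∑ m, w i m * ξ (Sum.inl m)) * θs (Sum.inr ())
            + dc i / θs (Sum.inr ()) * ξ (Sum.inr ())) * e i n) ^ 2 :=
          Finset.sum_congr rfl fun n _ => by rw [hinner n]
      _ = _ := ortho_sq e he _
  -- norm characterization
  have hnormsum : ∀ ξ : EuclideanSpace ℝ (Fin dd ⊕ Unit), ‖ξ‖ = 1 →
      (∑ m, ξ (Sum.inl m) ^ 2) + ξ (Sum.inr ()) ^ 2 = 1 := by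
    intro ξ h
    have h1 : Real.sqrt (∑ j, ‖ξ j‖ ^ 2) = 1 := by rw [← EuclideanSpace.norm_eq]; exact h
    have h2 : ∑ j, ‖ξ j‖ ^ 2 = 1 := Real.sqrt_eq_one.mp h1
    rw [Fintype.sum_sum_type] at h2
    simpa [Real.norm_eq_abs, sq_abs] using h2
  set SS : Set ℝ := {c : ℝ | ∃ ξ : EuclideanSpace ℝ (Fin dd ⊕ Unit),
    ‖ξ‖ = 1 ∧ fderiv ℝ (fderiv ℝ L) θs ξ ξ = c} with hSSdef
  have hsharp : sharpness L θs = sSup SS := rfl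
  have hub : ∀ c ∈ SS, c ≤ (1 / (N : ℝ)) * (σ ⟨0, hr⟩ ^ 2 * θs (Sum.inr ()) ^ 2
      + (∑ i, dc i ^ 2) / θs (Sum.inr ()) ^ 2) := by
    rintro c ⟨ξ, hξ, rfl⟩
    rw [hHess ξ]
    have hn1 := hnormsum ξ hξ
    have hbes : ∑ i, (∑ m, w i m * ξ (Sum.inl m)) ^ 2 ≤ ∑ m, ξ (Sum.inl m) ^ 2 := by
      simpa using bessel w hw (fun m => ξ (Sum.inl m))
    refine mul_le_mul_of_nonneg_left ?_ (by positivity)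
    exact key_upper hr σ dc (fun i => ∑ m, w i m * ξ (Sum.inl m)) (θs (Sum.inr ()))
      (ξ (Sum.inr ())) (∑ m, ξ (Sum.inl m) ^ 2) hσpos hσdec hv hbes (le_of_eq hn1)
      (Finset.sum_nonneg fun m _ => sq_nonneg _)
  have hbdd : BddAbove SS := ⟨_, fun c hc => hub c hc⟩
  -- lower bound witness
  set E0 : ℝ := σ ⟨0, hr⟩ ^ 2 * θs (Sum.inr ()) ^ 2
      + dc ⟨0, hr⟩ ^ 2 / θs (Sum.inr ()) ^ 2 with hE0
  have hE0pos : 0 < E0 := by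
    rw [hE0]
    exact add_pos_of_pos_of_nonneg (mul_pos (pow_pos (hσpos _) 2) hv2)
      (div_nonneg (sq_nonneg _) hv2.le)
  set R : ℝ := Real.sqrt E0 with hRdef
  have hRpos : 0 < R := Real.sqrt_pos.mpr hE0pos
  have hR0 : R ≠ 0 := hRpos.ne'
  have hR2 : R ^ 2 = E0 := Real.sq_sqrt hE0pos.le
  set ξ0 : EuclideanSpace ℝ (Fin dd ⊕ Unit) := WithLp.toLp 2 (fun j =>
    Sum.elim (fun m => (σ ⟨0, hr⟩ * θs (Sum.inr ()) / R) * w ⟨0, hr⟩ m)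
      (fun _ => dc ⟨0, hr⟩ / θs (Sum.inr ()) / R) j) with hξ0
  have hξl : ∀ m, ξ0 (Sum.inl m) = (σ ⟨0, hr⟩ * θs (Sum.inr ()) / R) * w ⟨0, hr⟩ m :=
    fun m => rfl
  have hξr : ξ0 (Sum.inr ()) = dc ⟨0, hr⟩ / θs (Sum.inr ()) / R := rfl
  have hw00 : ∑ m, w ⟨0, hr⟩ m ^ 2 = 1 := by
    have h := hw ⟨0, hr⟩ ⟨0, hr⟩
    simpa [sq] using h
  have hone : (σ ⟨0, hr⟩ * θs (Sum.inr ()) / R) ^ 2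
      + (dc ⟨0, hr⟩ / θs (Sum.inr ()) / R) ^ 2 = 1 := by
    rw [div_pow, div_pow, ← add_div, hR2, hE0, mul_pow, div_pow]
    exact div_self hE0pos.ne'
  have hξnorm : ‖ξ0‖ = 1 := by
    rw [EuclideanSpace.norm_eq]
    have hsum : ∑ j, ‖ξ0 j‖ ^ 2 = 1 := by
      rw [Fintype.sum_sum_type]
      simp only [hξl, hξr, Real.norm_eq_abs, sq_abs]
      have hterm : ∀ m : Fin dd, ((σ ⟨0, hr⟩ * θs (Sum.inr ()) / R) * w ⟨0, hr⟩ m) ^ 2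
          = (σ ⟨0, hr⟩ * θs (Sum.inr ()) / R) ^ 2 * (w ⟨0, hr⟩ m) ^ 2 := fun m => by ring
      simp_rw [hterm]
      rw [← Finset.mul_sum, hw00, mul_one, Fintype.sum_unique]
      exact hone
    rw [hsum, Real.sqrt_one]
  have hα0 : ∀ i : Fin r, ∑ m, w i m * ξ0 (Sum.inl m)
      = if i = ⟨0, hr⟩ then σ ⟨0, hr⟩ * θs (Sum.inr ()) / R else 0 := by
    intro i
    simp_rw [hξl]
    have hterm : ∀ m : Fin dd, w i m * ((σ ⟨0, hr⟩ * θs (Sum.inr ()) / R) * w ⟨0, hr⟩ m)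
        = (σ ⟨0, hr⟩ * θs (Sum.inr ()) / R) * (w i m * w ⟨0, hr⟩ m) := fun m => by ring
    simp_rw [hterm]
    rw [← Finset.mul_sum, hw i ⟨0, hr⟩]
    by_cases h : i = ⟨0, hr⟩ <;> simp [h]
  have hterm0 : (σ ⟨0, hr⟩ * (∑ m, w ⟨0, hr⟩ m * ξ0 (Sum.inl m)) * θs (Sum.inr ())
      + dc ⟨0, hr⟩ / θs (Sum.inr ()) * ξ0 (Sum.inr ())) ^ 2 = E0 := by
    rw [hα0 ⟨0, hr⟩, if_pos rfl, hξr]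
    have hstep : σ ⟨0, hr⟩ * (σ ⟨0, hr⟩ * θs (Sum.inr ()) / R) * θs (Sum.inr ())
        + dc ⟨0, hr⟩ / θs (Sum.inr ()) * (dc ⟨0, hr⟩ / θs (Sum.inr ()) / R) = E0 / R := by
      rw [hE0]
      field_simp
    rw [hstep, div_pow, hR2, sq]
    exact mul_div_cancel_right₀ _ hE0pos.ne'
  have hmem : (1 / (N : ℝ)) * ∑ i, (σ i * (∑ m, w i m * ξ0 (Sum.inl m)) * θs (Sum.inr ())
      + dc i / θs (Sum.inr ()) * ξ0 (Sum.inr ())) ^ 2 ∈ SS := ⟨ξ0, hξnorm, hHess ξ0⟩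
  have hlow : (1 / (N : ℝ)) * E0 ≤ sSup SS := by
    refine le_trans ?_ (le_csSup hbdd hmem)
    refine mul_le_mul_of_nonneg_left ?_ (by positivity)
    calc E0 = (σ ⟨0, hr⟩ * (∑ m, w ⟨0, hr⟩ m * ξ0 (Sum.inl m)) * θs (Sum.inr ())
          + dc ⟨0, hr⟩ / θs (Sum.inr ()) * ξ0 (Sum.inr ())) ^ 2 := hterm0.symm
      _ ≤ ∑ i, (σ i * (∑ m, w i m * ξ0 (Sum.inl m)) * θs (Sum.inr ())
          + dc i / θs (Sum.inr ()) * ξ0 (Sum.inr ())) ^ 2 :=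
        Finset.single_le_sum (f := fun i : Fin r => (σ i * (∑ m, w i m * ξ0 (Sum.inl m))
            * θs (Sum.inr ()) + dc i / θs (Sum.inr ()) * ξ0 (Sum.inr ())) ^ 2)
          (fun i _ => sq_nonneg _) (Finset.mem_univ (⟨0, hr⟩ : Fin r))
  have hupper : sSup SS ≤ (1 / (N : ℝ)) * (σ ⟨0, hr⟩ ^ 2 * θs (Sum.inr ()) ^ 2
      + (∑ i, dc i ^ 2) / θs (Sum.inr ()) ^ 2) :=
    Real.sSup_le hub (by positivity)
  refine ⟨hv, hconj2, ?_, ?_⟩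
  · rw [hsharp]
    exact hlow
  · rw [hsharp]
    exact hupper
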